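/- Fix n ≥ 2. There exists α₀ ∈ (0, 1/4] such that for all 0 < α ≤ α₀ the following holds. Suppose u ∈ W^{1,2}(D₁, S²) has the form u(r,θ) = Π⁻¹(f(r)(cos nθ, sin nθ)) with f(1) = α, lim_{r→0} f(r) = +∞, min_{0≤r≤1} f(r) = a > 0, and s := inf{r ∈ (0,1] : f(r) = 1/2} ≤ C₀ a for a fixed constant C₀. Then (1/2)∫_{D₁} |∇u|² dx dy > 4πn + 4πn α²/(1+α²). -/

import Mathlib

open MeasureTheory Real Set intervalIntegral

noncomputable section

namespace Stmt15Aux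

/-- The energy integrand. -/
def En (N : ℝ) (f f' : ℝ → ℝ) (r : ℝ) : ℝ :=
  ((f' r) ^ 2 + N ^ 2 * (f r) ^ 2 / r ^ 2) / (1 + (f r) ^ 2) ^ 2 * r

/-- The field used to build potentials. -/
def GG (N c x : ℝ) : ℝ :=
  2 * Real.sqrt (N ^ 2 * x ^ 2 - c * (1 + x ^ 2) ^ 2) / (1 + x ^ 2) ^ 2

lemma GG_cont (N c : ℝ) : Continuous (GG N c) := by
  apply Continuous.div
  · exact continuous_const.mul (Real.continuous_sqrt.comp (by continuity))
  · continuity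
  · intro x; positivity

lemma GG_nonneg (N c x : ℝ) : 0 ≤ GG N c x := by
  unfold GG; positivity

lemma En_nonneg (N : ℝ) (f f' : ℝ → ℝ) (r : ℝ) (hr : 0 ≤ r) : 0 ≤ En N f f' r := by
  unfold En
  apply mul_nonneg _ hr
  positivity

/-- Key pointwise inequality. -/
lemma ptwise (N c σ r F F' : ℝ) (hr : 0 < r) (hσ : σ = 1 ∨ σ = -1)
    (hdom : c * (1 + F ^ 2) ^ 2 ≤ N ^ 2 * F ^ 2) :
    c / r + σ * (GG N c F * F') ≤ (F' ^ 2 + N ^ 2 * F ^ 2 / r ^ 2) / (1 + F ^ 2) ^ 2 * r := by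
  have hσ2 : σ ^ 2 = 1 := by rcases hσ with h | h <;> rw [h] <;> norm_num
  set d := Real.sqrt (N ^ 2 * F ^ 2 - c * (1 + F ^ 2) ^ 2) with hd
  have hd2 : d ^ 2 = N ^ 2 * F ^ 2 - c * (1 + F ^ 2) ^ 2 := Real.sq_sqrt (by linarith)
  have pos : (0:ℝ) < r * (1 + F ^ 2) ^ 2 := by positivity
  rw [← mul_le_mul_iff_of_pos_right pos]
  have hF0 : (1 : ℝ) + F ^ 2 ≠ 0 := by positivity
  have lhs_eq : (c / r + σ * (GG N c F * F')) * (r * (1 + F ^ 2) ^ 2)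
      = c * (1 + F ^ 2) ^ 2 + 2 * σ * d * F' * r := by
    unfold GG; rw [← hd]; field_simp
  have rhs_eq : (F' ^ 2 + N ^ 2 * F ^ 2 / r ^ 2) / (1 + F ^ 2) ^ 2 * r * (r * (1 + F ^ 2) ^ 2)
      = F' ^ 2 * r ^ 2 + N ^ 2 * F ^ 2 := by
    field_simp
  rw [lhs_eq, rhs_eq]
  nlinarith [sq_nonneg (F' * r - σ * d), hσ2, hd2]

lemma GG_le (N c x : ℝ) (hN : 0 ≤ N) (hx : 0 ≤ x) (hc : 0 ≤ c) :
    GG N c x ≤ 2 * N * x / (1 + x ^ 2) ^ 2 := by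
  unfold GG
  have h1 : Real.sqrt (N ^ 2 * x ^ 2 - c * (1 + x ^ 2) ^ 2) ≤ N * x := by
    have h2 : N ^ 2 * x ^ 2 - c * (1 + x ^ 2) ^ 2 ≤ (N * x) ^ 2 := by nlinarith [sq_nonneg (1 + x ^ 2)]
    calc Real.sqrt (N ^ 2 * x ^ 2 - c * (1 + x ^ 2) ^ 2) ≤ Real.sqrt ((N * x) ^ 2) :=
          Real.sqrt_le_sqrt h2
      _ = N * x := Real.sqrt_sq (by positivity)
  exact (div_le_div_iff_of_pos_right (by positivity)).2 (by linarith)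

/-- AM-GM domination for integrability. -/
lemma absGGmul_le_En (N c : ℝ) (f f' : ℝ → ℝ) (r : ℝ) (hr : 0 < r) (hN : 0 ≤ N)
    (hF : 0 ≤ f r) (hc : 0 ≤ c) :
    |GG N c (f r) * f' r| ≤ En N f f' r := by
  set F := f r
  set F' := f' r
  have h1 : |GG N c F * F'| = GG N c F * |F'| := by
    rw [abs_mul, abs_of_nonneg (GG_nonneg N c F)]
  have h2 : GG N c F * |F'| ≤ (2 * N * F / (1 + F ^ 2) ^ 2) * |F'| :=
    mul_le_mul_of_nonneg_right (GG_le N c F hN hF hc) (abs_nonneg _)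
  have pos : (0:ℝ) < r * (1 + F ^ 2) ^ 2 := by positivity
  have h3 : (2 * N * F / (1 + F ^ 2) ^ 2) * |F'| ≤ En N f f' r := by
    unfold En
    rw [← mul_le_mul_iff_of_pos_right pos]
    have e1 : (2 * N * F / (1 + F ^ 2) ^ 2) * |F'| * (r * (1 + F ^ 2) ^ 2)
        = 2 * N * F * |F'| * r := by field_simp
    have e2 : (F' ^ 2 + N ^ 2 * F ^ 2 / r ^ 2) / (1 + F ^ 2) ^ 2 * r * (r * (1 + F ^ 2) ^ 2)
        = F' ^ 2 * r ^ 2 + N ^ 2 * F ^ 2 := by field_simp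
    rw [e1, e2]
    nlinarith [sq_nonneg (|F'| * r - N * F), abs_nonneg F', sq_abs F']
  rw [h1]; exact le_trans h2 h3

lemma sqrt_lb (A B : ℝ) (hA : 0 < A) (hB : 0 ≤ B) (hBA : B ≤ A ^ 2) :
    A - B / (2 * A) - B ^ 2 / (2 * A ^ 3) ≤ Real.sqrt (A ^ 2 - B) := by
  rcases le_or_gt (A - B / (2 * A) - B ^ 2 / (2 * A ^ 3)) 0 with h | h
  · exact le_trans h (Real.sqrt_nonneg _)
  · have hrw : A - B / (2 * A) - B ^ 2 / (2 * A ^ 3) = (2 * A ^ 4 - A ^ 2 * B - B ^ 2) / (2 * A ^ 3) := by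
      field_simp
    rw [hrw] at h ⊢
    rw [Real.le_sqrt h.le (by linarith)]
    rw [div_pow, div_le_iff₀ (by positivity)]
    nlinarith [mul_nonneg (mul_nonneg (sq_nonneg B) (sub_nonneg.2 hBA))
      (by positivity : (0:ℝ) ≤ 3 * A ^ 2 + B)]

lemma domfact (N a F : ℝ) (ha : 0 < a) (ha4 : a ≤ 1/4) (h1 : a ≤ F) (h2 : F ≤ 2) :
    (N ^ 2 * a ^ 2 / (1 + a ^ 2) ^ 2) * (1 + F ^ 2) ^ 2 ≤ N ^ 2 * F ^ 2 := by
  have hF0 : 0 ≤ F := le_trans ha.le h1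
  have haF : a * F ≤ 1/2 := by nlinarith
  have key : a ^ 2 * (1 + F ^ 2) ^ 2 ≤ F ^ 2 * (1 + a ^ 2) ^ 2 := by
    nlinarith [mul_nonneg (mul_nonneg (mul_nonneg (sub_nonneg.2 h1)
      (by linarith : (0:ℝ) ≤ 1 - a * F)) (by positivity : (0:ℝ) ≤ F + a))
      (by positivity : (0:ℝ) ≤ 1 + a * F)]
  have hpos : (0:ℝ) < (1 + a ^ 2) ^ 2 := by positivity
  rw [div_mul_eq_mul_div, div_le_iff₀ hpos]
  nlinarith [mul_le_mul_of_nonneg_left key (sq_nonneg N)]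

lemma hasDerivAt_A (N x : ℝ) (hN : 0 ≤ N) (hx : 0 ≤ x) :
    HasDerivAt (fun y : ℝ => -N / (1 + y ^ 2)) (GG N 0 x) x := by
  have h1 : HasDerivAt (fun y : ℝ => 1 + y ^ 2) (2 * x) x := by
    simpa using ((hasDerivAt_pow 2 x).const_add 1)
  have h2 := h1.inv (by positivity : (1:ℝ) + x ^ 2 ≠ 0)
  have h3 := h2.const_mul (-N)
  have hval : GG N 0 x = -N * (-(2 * x) / ((1 + x ^ 2) ^ 2)) := by
    unfold GG
    rw [show N ^ 2 * x ^ 2 - 0 * (1 + x ^ 2) ^ 2 = (N * x) ^ 2 by ring,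
      Real.sqrt_sq (by positivity)]
    field_simp
  rw [hval, show (fun y : ℝ => -N / (1 + y ^ 2)) = (fun y : ℝ => -N * (1 + y ^ 2)⁻¹) from funext fun y => div_eq_mul_inv _ _]
  exact h3

/-- The master integration-by-potential lemma. -/
lemma piece (N : ℝ) (f f' : ℝ → ℝ)
    (hf : ∀ r ∈ Ioc (0:ℝ) 1, HasDerivAt f (f' r) r)
    (hfpos : ∀ r ∈ Ioc (0:ℝ) 1, 0 < f r)
    (hN : 0 ≤ N)
    (hEint : IntervalIntegrable (En N f f') volume 0 1)
    (p q c σ : ℝ) (hp : 0 < p) (hpq : p ≤ q) (hq : q ≤ 1)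
    (hc : 0 ≤ c) (hσ : σ = 1 ∨ σ = -1)
    (hdom : ∀ r ∈ Icc p q, c * (1 + (f r) ^ 2) ^ 2 ≤ N ^ 2 * (f r) ^ 2)
    (A : ℝ → ℝ)
    (hA : ∀ r ∈ Icc p q, HasDerivAt A (GG N c (f r)) (f r)) :
    c * (Real.log q - Real.log p) + σ * (A (f q) - A (f p)) ≤ ∫ r in p..q, En N f f' r := by
  have hsub : Icc p q ⊆ Ioc 0 1 := fun r hr => ⟨lt_of_lt_of_le hp hr.1, le_trans hr.2 hq⟩
  have hsub' : Ioc p q ⊆ Ioc 0 1 := fun r hr => ⟨lt_trans hp hr.1, le_trans hr.2 hq⟩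
  set h' : ℝ → ℝ := fun r => c / r + σ * (GG N c (f r) * f' r) with hh'
  have hEpq : IntervalIntegrable (En N f f') volume p q := by
    apply hEint.mono_set
    rw [uIcc_of_le hpq, uIcc_of_le (by linarith : (0:ℝ) ≤ 1)]
    exact fun x hx => ⟨by linarith [hx.1], by linarith [hx.2]⟩
  have hderiv : ∀ r ∈ uIcc p q,
      HasDerivAt (fun u => c * Real.log u + σ * A (f u)) (h' r) r := by
    rw [uIcc_of_le hpq]
    intro r hr
    have hr0 : 0 < r := lt_of_lt_of_le hp hr.1
    have h1 : HasDerivAt (fun u : ℝ => c * Real.log u) (c / r) r := by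
      simpa [div_eq_mul_inv, mul_comm] using (Real.hasDerivAt_log hr0.ne').const_mul c
    have h2 : HasDerivAt (fun u => A (f u)) (GG N c (f r) * f' r) r :=
      (hA r hr).comp r (hf r (hsub hr))
    exact h1.add (h2.const_mul σ)
  have hmeasIoc : MeasurableSet (Ioc p q) := measurableSet_Ioc
  have hfc : ContinuousOn f (Ioc p q) := fun r hr =>
    ((hf r (hsub' hr)).continuousAt).continuousWithinAt
  have hae : ∀ᵐ r ∂(volume.restrict (Ioc p q)), f' r = deriv f r := by
    rw [ae_restrict_iff' hmeasIoc]
    exact ae_of_all _ fun r hr => ((hf r (hsub' hr)).deriv).symm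
  have hH : AEStronglyMeasurable (fun r => c / r + σ * (GG N c (f r) * deriv f r))
      (volume.restrict (Ioc p q)) := by
    apply AEStronglyMeasurable.add
    · exact (continuousOn_const.div continuousOn_id
        (fun x hx => ne_of_gt (lt_trans hp hx.1))).aestronglyMeasurable hmeasIoc
    · exact aestronglyMeasurable_const.mul
        ((((GG_cont N c).comp_continuousOn hfc).aestronglyMeasurable hmeasIoc).mul
          ((measurable_deriv f).aestronglyMeasurable.restrict))
  have hmeash' : AEStronglyMeasurable h' (volume.restrict (Ioc p q)) := by
    apply hH.congr
    filter_upwards [hae] with r hr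
    rw [hh']; simp only [hr]
  have hbound : ∀ᵐ r ∂(volume.restrict (Ioc p q)), ‖h' r‖ ≤ c / p + En N f f' r := by
    rw [ae_restrict_iff' hmeasIoc]
    refine ae_of_all _ fun r hr => ?_
    have hr0 : 0 < r := lt_trans hp hr.1
    have h1 : |GG N c (f r) * f' r| ≤ En N f f' r :=
      absGGmul_le_En N c f f' r hr0 hN (hfpos r (hsub' hr)).le hc
    have h2 : c / r ≤ c / p := by gcongr; exact hr.1.le
    have habs : |σ| = 1 := by rcases hσ with h | h <;> rw [h] <;> norm_num
    calc ‖h' r‖ = |c / r + σ * (GG N c (f r) * f' r)| := rfl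
      _ ≤ |c / r| + |σ * (GG N c (f r) * f' r)| := abs_add_le _ _
      _ = c / r + |GG N c (f r) * f' r| := by
          rw [abs_of_nonneg (by positivity : (0:ℝ) ≤ c / r), abs_mul, habs, one_mul]
      _ ≤ c / p + En N f f' r := add_le_add h2 h1
  have hInt : IntervalIntegrable h' volume p q := by
    constructor
    · exact Integrable.mono'
        ((integrableOn_const measure_Ioc_lt_top.ne).add hEpq.1) hmeash' hbound
    · rw [Ioc_eq_empty (not_lt.2 hpq)]
      exact integrableOn_empty
  have hFTC : ∫ r in p..q, h' r
      = (c * Real.log q + σ * A (f q)) - (c * Real.log p + σ * A (f p)) :=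
    integral_eq_sub_of_hasDerivAt hderiv hInt
  have hmono : ∫ r in p..q, h' r ≤ ∫ r in p..q, En N f f' r := by
    apply integral_mono_on hpq hInt hEpq
    intro r hr
    exact ptwise N c σ r (f r) (f' r) (lt_of_lt_of_le hp hr.1) hσ (hdom r hr)
  calc c * (Real.log q - Real.log p) + σ * (A (f q) - A (f p))
      = (c * Real.log q + σ * A (f q)) - (c * Real.log p + σ * A (f p)) := by ring
    _ = ∫ r in p..q, h' r := hFTC.symm
    _ ≤ ∫ r in p..q, En N f f' r := hmono

lemma GG_zero (N x : ℝ) (hN : 0 ≤ N) (hx : 0 ≤ x) :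
    GG N 0 x = 2 * N * x / (1 + x ^ 2) ^ 2 := by
  unfold GG
  rw [show N ^ 2 * x ^ 2 - 0 * (1 + x ^ 2) ^ 2 = (N * x) ^ 2 by ring,
    Real.sqrt_sq (by positivity)]
  ring

set_option maxHeartbeats 1000000 in
lemma S2_lb (N a c₀ y : ℝ) (hN : 2 ≤ N) (ha : 0 < a) (ha4 : a ≤ 1/4)
    (hy1 : a ≤ y) (hy2 : y ≤ 1/2) (hc₀ : c₀ = N ^ 2 * a ^ 2 / (1 + a ^ 2) ^ 2) :
    N / (1 + a ^ 2) - N / (1 + y ^ 2) - (c₀ / N) * (Real.log y - Real.log a)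
      - (25/32) * (c₀ / N) ≤ ∫ t in a..y, GG N c₀ t := by
  have hN0 : (0:ℝ) < N := by linarith
  have hc₀pos : 0 < c₀ := by rw [hc₀]; positivity
  set l : ℝ → ℝ := fun t =>
    2 * N * t / (1 + t ^ 2) ^ 2 - c₀ / (N * t) - (25/16) * c₀ ^ 2 / (N ^ 3 * t ^ 3) with hl
  have step1 : ∀ t ∈ Icc a y, l t ≤ GG N c₀ t := by
    intro t ht
    have ht0 : 0 < t := lt_of_lt_of_le ha ht.1
    have ht2 : t ≤ 1/2 := le_trans ht.2 hy2
    have hdom : c₀ * (1 + t ^ 2) ^ 2 ≤ N ^ 2 * t ^ 2 := by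
      rw [hc₀]; exact domfact N a t ha ha4 ht.1 (by linarith)
    have hBA : c₀ * (1 + t ^ 2) ^ 2 ≤ (N * t) ^ 2 := by nlinarith [hdom]
    have hslb := sqrt_lb (N * t) (c₀ * (1 + t ^ 2) ^ 2) (by positivity) (by positivity) hBA
    have key : GG N c₀ t
        = 2 * Real.sqrt ((N * t) ^ 2 - c₀ * (1 + t ^ 2) ^ 2) / (1 + t ^ 2) ^ 2 := by
      unfold GG; rw [show (N * t) ^ 2 = N ^ 2 * t ^ 2 by ring]
    have e : 2 * ((N * t) - (c₀ * (1 + t ^ 2) ^ 2) / (2 * (N * t))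
          - (c₀ * (1 + t ^ 2) ^ 2) ^ 2 / (2 * (N * t) ^ 3)) / (1 + t ^ 2) ^ 2
        = 2 * N * t / (1 + t ^ 2) ^ 2 - c₀ / (N * t)
          - c₀ ^ 2 * (1 + t ^ 2) ^ 2 / (N ^ 3 * t ^ 3) := by
      field_simp
    have htsq : t ^ 2 ≤ 1/4 := by nlinarith
    have h14 : (1 + t ^ 2) ^ 2 ≤ 25/16 := by nlinarith [htsq]
    have h15 : c₀ ^ 2 * (1 + t ^ 2) ^ 2 / (N ^ 3 * t ^ 3) ≤ (25/16) * c₀ ^ 2 / (N ^ 3 * t ^ 3) :=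
      (div_le_div_iff_of_pos_right (by positivity)).2 (by nlinarith)
    have lt_def : l t = 2 * N * t / (1 + t ^ 2) ^ 2 - c₀ / (N * t)
        - (25/16) * c₀ ^ 2 / (N ^ 3 * t ^ 3) := rfl
    calc l t ≤ 2 * ((N * t) - (c₀ * (1 + t ^ 2) ^ 2) / (2 * (N * t))
          - (c₀ * (1 + t ^ 2) ^ 2) ^ 2 / (2 * (N * t) ^ 3)) / (1 + t ^ 2) ^ 2 := by
          rw [lt_def, e]
          linarith [h15]
      _ ≤ GG N c₀ t := by
          rw [key]
          exact (div_le_div_iff_of_pos_right (by positivity)).2 (by linarith [hslb])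
  have hGint : IntervalIntegrable (GG N c₀) volume a y := (GG_cont N c₀).intervalIntegrable a y
  have hlcont : ContinuousOn l (uIcc a y) := by
    rw [uIcc_of_le hy1]
    have hne : ∀ t ∈ Icc a y, t ≠ 0 := fun t ht => (lt_of_lt_of_le ha ht.1).ne'
    have c1 : ContinuousOn (fun t : ℝ => 2 * N * t / (1 + t ^ 2) ^ 2) (Icc a y) :=
      ContinuousOn.div (by fun_prop) (by fun_prop) (fun t _ => by positivity)
    have c2 : ContinuousOn (fun t : ℝ => c₀ / (N * t)) (Icc a y) :=
      ContinuousOn.div (by fun_prop) (by fun_prop)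
        (fun t ht => mul_ne_zero hN0.ne' (hne t ht))
    have c3 : ContinuousOn (fun t : ℝ => (25/16) * c₀ ^ 2 / (N ^ 3 * t ^ 3)) (Icc a y) :=
      ContinuousOn.div (by fun_prop) (by fun_prop)
        (fun t ht => mul_ne_zero (by positivity) (pow_ne_zero 3 (hne t ht)))
    exact (c1.sub c2).sub c3
  have hlint : IntervalIntegrable l volume a y := hlcont.intervalIntegrable
  have hmono : ∫ t in a..y, l t ≤ ∫ t in a..y, GG N c₀ t :=
    integral_mono_on hy1 hlint hGint step1
  set Φ : ℝ → ℝ := fun t =>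
    -N / (1 + t ^ 2) - (c₀ / N) * Real.log t + (25/32) * (c₀ ^ 2 / N ^ 3) * (t ^ 2)⁻¹ with hΦdef
  have hΦ : ∀ t ∈ uIcc a y, HasDerivAt Φ (l t) t := by
    rw [uIcc_of_le hy1]
    intro t ht
    have ht0 : 0 < t := lt_of_lt_of_le ha ht.1
    have p1 : HasDerivAt (fun u : ℝ => -N / (1 + u ^ 2)) (2 * N * t / (1 + t ^ 2) ^ 2) t := by
      have := hasDerivAt_A N t hN0.le ht0.le
      rwa [GG_zero N t hN0.le ht0.le] at this
    have p2 : HasDerivAt (fun u : ℝ => (c₀ / N) * Real.log u) ((c₀ / N) * t⁻¹) t :=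
      (Real.hasDerivAt_log ht0.ne').const_mul (c₀ / N)
    have p3 : HasDerivAt (fun u : ℝ => (25/32) * (c₀ ^ 2 / N ^ 3) * (u ^ 2)⁻¹)
        ((25/32) * (c₀ ^ 2 / N ^ 3) * (-(2 * t ^ 1) / (t ^ 2) ^ 2)) t := by
      exact ((hasDerivAt_pow 2 t).inv (pow_ne_zero 2 ht0.ne')).const_mul _
    have psum := (p1.sub p2).add p3
    have hval : 2 * N * t / (1 + t ^ 2) ^ 2 - (c₀ / N) * t⁻¹
        + (25/32) * (c₀ ^ 2 / N ^ 3) * (-(2 * t ^ 1) / (t ^ 2) ^ 2) = l t := by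
      have hden : ((1:ℝ) + t ^ 2) ≠ 0 := by positivity
      simp only [hl]; field_simp [ht0.ne', hN0.ne', hden]; ring
    rw [← hval]
    exact psum
  have hFTC : ∫ t in a..y, l t = Φ y - Φ a := integral_eq_sub_of_hasDerivAt hΦ hlint
  have e5 : c₀ ^ 2 / N ^ 3 * (a ^ 2)⁻¹ ≤ c₀ / N := by
    have e6 : c₀ ^ 2 / N ^ 3 * (a ^ 2)⁻¹ = (c₀ / N) * (1 / (1 + a ^ 2) ^ 2) := by
      rw [hc₀]; field_simp
    rw [e6]
    have h9 : 1 / (1 + a ^ 2) ^ 2 ≤ (1:ℝ) := by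
      rw [div_le_one (by positivity)]; nlinarith
    exact mul_le_of_le_one_right (by positivity) h9
  have hy0 : 0 < y := lt_of_lt_of_le ha hy1
  have hfin : N / (1 + a ^ 2) - N / (1 + y ^ 2) - (c₀ / N) * (Real.log y - Real.log a)
      - (25/32) * (c₀ / N) ≤ Φ y - Φ a := by
    simp only [hΦdef]
    have h7 : (0:ℝ) ≤ (25/32) * (c₀ ^ 2 / N ^ 3) * (y ^ 2)⁻¹ := by positivity
    ring_nf at e5 h7 ⊢
    linarith
  calc N / (1 + a ^ 2) - N / (1 + y ^ 2) - (c₀ / N) * (Real.log y - Real.log a)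
      - (25/32) * (c₀ / N) ≤ Φ y - Φ a := hfin
    _ = ∫ t in a..y, l t := hFTC.symm
    _ ≤ ∫ t in a..y, GG N c₀ t := hmono

end Stmt15Aux

open Stmt15Aux

set_option maxHeartbeats 1600000 in
/-- key proposition. -/
theorem stmt15 (n : ℕ) (hn : 2 ≤ n) (C₀ : ℝ) (hC₀ : 0 < C₀) :
    ∃ α₀ : ℝ, 0 < α₀ ∧ α₀ ≤ 1/4 ∧
      ∀ α : ℝ, 0 < α → α ≤ α₀ →
      ∀ f f' : ℝ → ℝ, ∀ a s : ℝ,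
        (∀ r ∈ Ioc (0:ℝ) 1, HasDerivAt f (f' r) r) →
        f 1 = α →
        Filter.Tendsto f (nhdsWithin 0 (Ioi 0)) Filter.atTop →
        0 < a →
        (∀ r ∈ Ioc (0:ℝ) 1, a ≤ f r) →
        (∃ r ∈ Ioc (0:ℝ) 1, f r = a) →
        s = sInf {r | r ∈ Ioc (0:ℝ) 1 ∧ f r = 1/2} →
        s ≤ C₀ * a →
        IntervalIntegrable
          (fun r => ((f' r) ^ 2 + (n : ℝ) ^ 2 * (f r) ^ 2 / r ^ 2) / (1 + (f r) ^ 2) ^ 2 * r)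
          volume 0 1 →
        4 * π * (∫ r in (0:ℝ)..1,
            ((f' r) ^ 2 + (n : ℝ) ^ 2 * (f r) ^ 2 / r ^ 2) / (1 + (f r) ^ 2) ^ 2 * r)
          > 4 * π * (n : ℝ) + 4 * π * (n : ℝ) * α ^ 2 / (1 + α ^ 2) := by
  have hπ : (0:ℝ) < π := Real.pi_pos
  set N := (n : ℝ) with hNdef
  have hN2 : (2:ℝ) ≤ N := by rw [hNdef]; exact_mod_cast hn
  have hN0 : (0:ℝ) < N := by linarith only [hN2]
  set M : ℝ := max C₀ 1 with hMdef
  have hM1 : (1:ℝ) ≤ M := le_max_right _ _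
  have hM0 : (0:ℝ) < M := by linarith only [hM1]
  have hMC : C₀ ≤ M := le_max_left _ _
  refine ⟨min (1/4) (2 * Real.exp (-5) / M ^ 2),
    lt_min (by norm_num) (by positivity), min_le_left _ _, ?_⟩
  intro α hα0 hαle f f' a s hf hf1 htend ha hmin hex hsdef hsC hint
  have hα14 : α ≤ 1/4 := le_trans hαle (min_le_left _ _)
  have hαM : α ≤ 2 * Real.exp (-5) / M ^ 2 := le_trans hαle (min_le_right _ _)
  have haα : a ≤ α := by rw [← hf1]; exact hmin 1 ⟨one_pos, le_refl 1⟩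
  have ha4 : a ≤ 1/4 := le_trans haα hα14
  have hfpos : ∀ r ∈ Ioc (0:ℝ) 1, 0 < f r := fun r hr => lt_of_lt_of_le ha (hmin r hr)
  set c₀ : ℝ := N ^ 2 * a ^ 2 / (1 + a ^ 2) ^ 2 with hc₀
  have hc₀pos : 0 < c₀ := by rw [hc₀]; positivity
  set K : ℝ := max 2 (Real.sqrt (2 * N / c₀)) with hK
  have hK2 : (2:ℝ) ≤ K := le_max_left _ _
  have hK0 : (0:ℝ) < K := by linarith only [hK2]
  obtain ⟨u, hu0, huK⟩ : ∃ u, 0 < u ∧ ∀ r, r ∈ Ioo (0:ℝ) u → K ≤ f r := by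
    have hev : ∀ᶠ r in nhdsWithin 0 (Ioi 0), K ≤ f r := htend.eventually_ge_atTop K
    rw [Filter.eventually_iff, mem_nhdsGT_iff_exists_Ioo_subset] at hev
    obtain ⟨u, hu, hsub⟩ := hev
    exact ⟨u, hu, fun r hr => hsub hr⟩
  have hcont : ContinuousOn f (Ioc 0 1) := fun x hx =>
    ((hf x hx).continuousAt).continuousWithinAt
  set r₁ : ℝ := min (u/2) (1/2) with hr₁def
  have hr₁0 : 0 < r₁ := lt_min (by linarith only [hu0]) (by norm_num)
  have hr₁u : r₁ < u := lt_of_le_of_lt (min_le_left _ _) (by linarith only [hu0])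
  have hr₁1 : r₁ ≤ 1/2 := min_le_right _ _
  have hfr₁ : K ≤ f r₁ := huK r₁ ⟨hr₁0, hr₁u⟩
  set S : Set ℝ := {r | r ∈ Ioc (0:ℝ) 1 ∧ f r = 1/2} with hSdef
  have hKhalf : ∀ x, 0 < x → x < u → f x ≠ 1/2 := by
    intro x hx1 hx2 h
    have hx3 := huK x ⟨hx1, hx2⟩
    rw [h] at hx3; linarith only [hx3, hK2]
  have hSsub : S ⊆ Icc r₁ 1 := by
    intro x hx
    rcases hx with ⟨hx1, hx2⟩
    refine ⟨?_, hx1.2⟩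
    by_contra hlt
    push_neg at hlt
    exact hKhalf x hx1.1 (lt_trans hlt hr₁u) hx2
  have hIccsub : Icc r₁ 1 ⊆ Ioc 0 1 := fun x hx => ⟨lt_of_lt_of_le hr₁0 hx.1, hx.2⟩
  have hSeq : S = Icc r₁ 1 ∩ f ⁻¹' {(1:ℝ)/2} := by
    ext x
    constructor
    · intro hx; exact ⟨hSsub hx, hx.2⟩
    · intro hx; exact ⟨hIccsub hx.1, hx.2⟩
  have hclosed : IsClosed (Icc r₁ 1 ∩ f ⁻¹' {(1:ℝ)/2}) :=
    (hcont.mono hIccsub).preimage_isClosed_of_isClosed isClosed_Icc isClosed_singleton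
  have hbdd : BddBelow S := ⟨r₁ - 1, fun x hx => by linarith only [(hSsub hx).1]⟩
  have hSne : S.Nonempty := by
    have hcic : ContinuousOn f (Icc r₁ 1) := hcont.mono hIccsub
    have hy : (1:ℝ)/2 ∈ Icc (f 1) (f r₁) :=
      ⟨by rw [hf1]; linarith only [hα14], by linarith only [hfr₁, hK2]⟩
    obtain ⟨x, hx, hfx⟩ := intermediate_value_Icc' (by linarith only [hr₁1] : r₁ ≤ 1) hcic hy
    exact ⟨x, hIccsub hx, hfx⟩
  have hsS : s ∈ S := by
    rw [hsdef, hSeq]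
    exact hclosed.csInf_mem (hSeq ▸ hSne) (hSeq ▸ hbdd)
  obtain ⟨⟨hs0, hs1⟩, hfs⟩ := hsS
  have hfhalf : ∀ r, 0 < r → r < s → 1/2 < f r := by
    intro r hr0 hrs
    by_contra hle
    push_neg at hle
    have hr1 : r ≤ 1 := by linarith only [hrs, hs1]
    have hrS : ∃ x ∈ S, x ≤ r := by
      rcases lt_or_ge r r₁ with h | h
      · exfalso
        have h9 := huK r ⟨hr0, lt_trans h hr₁u⟩
        linarith only [h9, hle, hK2]
      · have hcic : ContinuousOn f (Icc r₁ r) :=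
          hcont.mono (fun x hx => ⟨lt_of_lt_of_le hr₁0 hx.1, le_trans hx.2 hr1⟩)
        have hy : (1:ℝ)/2 ∈ Icc (f r) (f r₁) := ⟨hle, by linarith only [hfr₁, hK2]⟩
        obtain ⟨x, hx, hfx⟩ := intermediate_value_Icc' h hcic hy
        exact ⟨x, ⟨⟨lt_of_lt_of_le hr₁0 hx.1, le_trans hx.2 hr1⟩, hfx⟩, hx.2⟩
    obtain ⟨x, hxS, hxr⟩ := hrS
    have h8 : s ≤ x := by rw [hsdef]; exact csInf_le hbdd hxS
    linarith only [h8, hxr, hrs]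
  obtain ⟨m, hm, hfm⟩ := hex
  have hsm : s < m := by
    rcases lt_trichotomy m s with h | h | h
    · exfalso; have h9 := hfhalf m hm.1 h; rw [hfm] at h9; linarith only [h9, ha4]
    · exfalso; rw [h, hfs] at hfm; linarith only [hfm, ha4]
    · exact h
  have hm0 : 0 < m := lt_trans hs0 hsm
  set ε : ℝ := min (u/2) (s/2) with hεdef
  have hε0 : 0 < ε := lt_min (by linarith only [hu0]) (by linarith only [hs0])
  have hεu : ε < u := lt_of_le_of_lt (min_le_left _ _) (by linarith only [hu0])
  have hεs : ε ≤ s := le_trans (min_le_right _ _) (by linarith only [hs0])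
  have hfε : K ≤ f ε := huK ε ⟨hε0, hεu⟩
  have hδ1 : N / (1 + (f ε) ^ 2) ≤ N / (1 + K ^ 2) := by
    have h1K : (1:ℝ) + K ^ 2 ≤ 1 + (f ε) ^ 2 := by
      nlinarith only [hfε, hK0, sq_nonneg (f ε - K)]
    exact div_le_div_of_nonneg_left hN0.le (by positivity) h1K
  have hδ2 : N / (1 + K ^ 2) ≤ N / 5 := by
    have h5 : (5:ℝ) ≤ 1 + K ^ 2 := by nlinarith only [hK2, sq_nonneg (K - 2)]
    exact div_le_div_of_nonneg_left hN0.le (by norm_num) h5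
  have hδ3 : N / (1 + K ^ 2) < c₀ / 2 := by
    have hKsq : 2 * N / c₀ ≤ K ^ 2 := by
      have h1 := Real.sq_sqrt (le_of_lt (by positivity : (0:ℝ) < 2 * N / c₀))
      have h2 : Real.sqrt (2 * N / c₀) ≤ K := le_max_right _ _
      nlinarith only [h1, h2, Real.sqrt_nonneg (2 * N / c₀),
        sq_nonneg (K - Real.sqrt (2 * N / c₀))]
    have hK2pos : (0:ℝ) < K ^ 2 := by positivity
    have h1 : N / (1 + K ^ 2) < N / K ^ 2 :=
      div_lt_div_of_pos_left hN0 hK2pos (by linarith only [hK2pos])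
    have h2 : N / K ^ 2 ≤ N / (2 * N / c₀) :=
      div_le_div_of_nonneg_left hN0.le (by positivity) hKsq
    have h3 : N / (2 * N / c₀) = c₀ / 2 := by
      field_simp
    linarith only [h1, h2, h3]
  set A : ℝ → ℝ := fun x => -N / (1 + x ^ 2) with hAdef
  have hEint : IntervalIntegrable (En N f f') volume 0 1 := hint
  have hAs : A (f s) = -(4/5) * N := by
    simp only [hAdef, hfs]
    rw [show ((1:ℝ) + (1/2) ^ 2) = 5/4 by norm_num]
    ring
  have hiint : ∀ p q : ℝ, 0 ≤ p → p ≤ q → q ≤ 1 →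
      IntervalIntegrable (En N f f') volume p q := by
    intro p q h1 h2 h3
    apply hEint.mono_set
    rw [uIcc_of_le h2, uIcc_of_le (by norm_num : (0:ℝ) ≤ 1)]
    exact fun x hx => ⟨le_trans h1 hx.1, le_trans hx.2 h3⟩
  have hp1 : (4/5) * N - N / (1 + (f ε) ^ 2) ≤ ∫ r in ε..s, En N f f' r := by
    have hpc := piece N f f' hf hfpos hN0.le hEint ε s 0 (-1) hε0 hεs hs1 le_rfl (Or.inr rfl)
      (fun r _ => by nlinarith only [sq_nonneg (N * f r)]) A
      (fun r hr => hasDerivAt_A N (f r) hN0.le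
        (hfpos r ⟨lt_of_lt_of_le hε0 hr.1, le_trans hr.2 hs1⟩).le)
    rw [hAs] at hpc
    have hAε : A (f ε) = -N / (1 + (f ε) ^ 2) := rfl
    rw [hAε] at hpc
    ring_nf at hpc ⊢
    linarith only [hpc]
  have h0ε : 0 ≤ ∫ r in (0:ℝ)..ε, En N f f' r :=
    intervalIntegral.integral_nonneg hε0.le (fun x hx => En_nonneg N f f' x hx.1)
  have htgt : N + N * α ^ 2 / (1 + α ^ 2) = 2 * N - N / (1 + α ^ 2) := by
    field_simp; ring
  have hαfrac : (16/17) * N ≤ N / (1 + α ^ 2) := by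
    rw [le_div_iff₀ (by positivity)]
    have hα2 : α ^ 2 ≤ 1/16 := by nlinarith only [hα14, hα0]
    nlinarith only [hα2, hN0, mul_le_mul_of_nonneg_left hα2 hN0.le]
  by_cases hcase : ∃ rr ∈ Icc s 1, 2 ≤ f rr
  · -- Case A: f reaches 2 somewhere in [s,1]
    obtain ⟨rr, hrr, hfrr⟩ := hcase
    have hrr0 : 0 < rr := lt_of_lt_of_le hs0 hrr.1
    have hpA : (4/5) * N - N / (1 + (f rr) ^ 2) ≤ ∫ r in s..rr, En N f f' r := by
      have hpc := piece N f f' hf hfpos hN0.le hEint s rr 0 1 hs0 hrr.1 hrr.2 le_rfl (Or.inl rfl)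
        (fun r _ => by nlinarith only [sq_nonneg (N * f r)]) A
        (fun r hr => hasDerivAt_A N (f r) hN0.le
          (hfpos r ⟨lt_of_lt_of_le hs0 hr.1, le_trans hr.2 hrr.2⟩).le)
      rw [hAs] at hpc
      have hArr : A (f rr) = -N / (1 + (f rr) ^ 2) := rfl
      rw [hArr] at hpc
      ring_nf at hpc ⊢
      linarith only [hpc]
    have hArr5 : N / (1 + (f rr) ^ 2) ≤ N / 5 := by
      have h5 : (5:ℝ) ≤ 1 + (f rr) ^ 2 := by nlinarith only [hfrr, sq_nonneg (f rr - 2)]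
      exact div_le_div_of_nonneg_left hN0.le (by norm_num) h5
    have hrr1 : 0 ≤ ∫ r in rr..1, En N f f' r :=
      intervalIntegral.integral_nonneg hrr.2
        (fun x hx => En_nonneg N f f' x (le_trans hrr0.le hx.1))
    have e1 : (∫ r in (0:ℝ)..ε, En N f f' r) + (∫ r in ε..s, En N f f' r)
        = ∫ r in (0:ℝ)..s, En N f f' r :=
      intervalIntegral.integral_add_adjacent_intervals
        (hiint 0 ε (le_refl 0) hε0.le (by linarith only [hεs, hs1]))
        (hiint ε s hε0.le hεs hs1)
    have e2 : (∫ r in (0:ℝ)..s, En N f f' r) + (∫ r in s..rr, En N f f' r)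
        = ∫ r in (0:ℝ)..rr, En N f f' r :=
      intervalIntegral.integral_add_adjacent_intervals
        (hiint 0 s (le_refl 0) hs0.le hs1) (hiint s rr hs0.le hrr.1 hrr.2)
    have e3 : (∫ r in (0:ℝ)..rr, En N f f' r) + (∫ r in rr..1, En N f f' r)
        = ∫ r in (0:ℝ)..1, En N f f' r :=
      intervalIntegral.integral_add_adjacent_intervals
        (hiint 0 rr (le_refl 0) hrr0.le hrr.2) (hiint rr 1 hrr0.le hrr.2 le_rfl)
    have hIlb : N + N * α ^ 2 / (1 + α ^ 2) < ∫ r in (0:ℝ)..1, En N f f' r := by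
      rw [htgt]
      linarith only [hδ1, hδ2, hαfrac, hp1, hpA, hArr5, h0ε, hrr1, e1, e2, e3, hN2]
    calc 4 * π * N + 4 * π * N * α ^ 2 / (1 + α ^ 2)
        = 4 * π * (N + N * α ^ 2 / (1 + α ^ 2)) := by ring
      _ < 4 * π * (∫ r in (0:ℝ)..1, En N f f' r) := by
          exact mul_lt_mul_of_pos_left hIlb (by positivity)
  · -- Case B: f < 2 on [s,1]
    push_neg at hcase
    set S2 : ℝ → ℝ := fun x => ∫ t in a..x, GG N c₀ t with hS2def
    have hS2deriv : ∀ x : ℝ, HasDerivAt S2 (GG N c₀ x) x := fun x =>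
      ((GG_cont N c₀).integral_hasStrictDerivAt a x).hasDerivAt
    have hS2a : S2 a = 0 := intervalIntegral.integral_same
    have hdom2 : ∀ r ∈ Icc s 1, c₀ * (1 + (f r) ^ 2) ^ 2 ≤ N ^ 2 * (f r) ^ 2 := by
      intro r hr
      have hrmem : r ∈ Ioc (0:ℝ) 1 := ⟨lt_of_lt_of_le hs0 hr.1, hr.2⟩
      rw [hc₀]
      exact domfact N a (f r) ha ha4 (hmin r hrmem) (le_of_lt (hcase r hr))
    have hp2 := piece N f f' hf hfpos hN0.le hEint s m c₀ (-1) hs0 hsm.le hm.2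
      hc₀pos.le (Or.inr rfl) (fun r hr => hdom2 r ⟨hr.1, le_trans hr.2 hm.2⟩) S2
      (fun r _ => hS2deriv (f r))
    rw [hfm, hfs, hS2a] at hp2
    have hp3 := piece N f f' hf hfpos hN0.le hEint m 1 c₀ 1 hm0 hm.2 le_rfl
      hc₀pos.le (Or.inl rfl) (fun r hr => hdom2 r ⟨le_trans hsm.le hr.1, hr.2⟩) S2
      (fun r _ => hS2deriv (f r))
    rw [hfm, hf1, hS2a, Real.log_one] at hp3
    have hS2half_eq : S2 (1/2) = ∫ t in a..(1/2 : ℝ), GG N c₀ t := rfl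
    have hS2α_eq : S2 α = ∫ t in a..α, GG N c₀ t := rfl
    have hS2h := S2_lb N a c₀ (1/2) hN2 ha ha4 (by linarith only [ha4]) le_rfl hc₀
    have hS2α := S2_lb N a c₀ α hN2 ha ha4 haα (by linarith only [hα14]) hc₀
    rw [← hS2half_eq] at hS2h
    rw [← hS2α_eq] at hS2α
    have e1 : (∫ r in (0:ℝ)..ε, En N f f' r) + (∫ r in ε..s, En N f f' r)
        = ∫ r in (0:ℝ)..s, En N f f' r :=
      intervalIntegral.integral_add_adjacent_intervals
        (hiint 0 ε (le_refl 0) hε0.le (by linarith only [hεs, hs1]))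
        (hiint ε s hε0.le hεs hs1)
    have e2 : (∫ r in (0:ℝ)..s, En N f f' r) + (∫ r in s..m, En N f f' r)
        = ∫ r in (0:ℝ)..m, En N f f' r :=
      intervalIntegral.integral_add_adjacent_intervals
        (hiint 0 s (le_refl 0) hs0.le hs1) (hiint s m hs0.le hsm.le hm.2)
    have e3 : (∫ r in (0:ℝ)..m, En N f f' r) + (∫ r in m..1, En N f f' r)
        = ∫ r in (0:ℝ)..1, En N f f' r :=
      intervalIntegral.integral_add_adjacent_intervals
        (hiint 0 m (le_refl 0) hm0.le hm.2) (hiint m 1 hm0.le hm.2 le_rfl)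
    have hlog_s : Real.log s ≤ Real.log C₀ + Real.log a := by
      rw [← Real.log_mul (ne_of_gt hC₀) ha.ne']
      exact Real.log_le_log hs0 hsC
    have hlog_a4 : Real.log a ≤ -(2 * Real.log 2) := by
      have h1 : Real.log a ≤ Real.log (1/4) := Real.log_le_log ha ha4
      have h2 : Real.log ((1:ℝ)/4) = -(2 * Real.log 2) := by
        rw [one_div, Real.log_inv, show (4:ℝ) = 2 ^ 2 by norm_num, Real.log_pow]
        push_cast; ring
      linarith only [h1, h2]
    have hlog_aα : Real.log a ≤ Real.log α := Real.log_le_log ha haα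
    have hlog_α : Real.log α ≤ Real.log 2 - 5 - 2 * Real.log M := by
      have h1 : Real.log α ≤ Real.log (2 * Real.exp (-5) / M ^ 2) := Real.log_le_log hα0 hαM
      have h2 : Real.log (2 * Real.exp (-5) / M ^ 2) = Real.log 2 - 5 - 2 * Real.log M := by
        rw [Real.log_div (by positivity) (by positivity),
          Real.log_mul (by norm_num) (Real.exp_ne_zero _), Real.log_exp, Real.log_pow]
        push_cast; ring
      linarith only [h1, h2]
    have hlog_CM : Real.log C₀ ≤ Real.log M := Real.log_le_log hC₀ hMC
    have hlog2a : (0.6931:ℝ) ≤ Real.log 2 := by linarith only [Real.log_two_gt_d9]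
    have hhalf : Real.log ((1:ℝ)/2) = -Real.log 2 := by rw [one_div, Real.log_inv]
    have ha2 : a ^ 2 ≤ 1/16 := by nlinarith only [ha4, ha]
    have hXge : (1:ℝ)/2 ≤ -Real.log s
        - (1/N) * (Real.log (1/2) + Real.log α - 2 * Real.log a + 25/16)
        - 2 * (1 + a ^ 2) / N := by
      have hW : 0 ≤ Real.log (1/2) + Real.log α - 2 * Real.log a + 25/16 := by
        rw [hhalf]; linarith only [hlog_aα, hlog_a4, hlog2a]
      have h1N : (1:ℝ)/N ≤ 1/2 := by
        rw [div_le_div_iff₀ hN0 (by norm_num)]; linarith only [hN2]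
      have h2 : (1/N) * (Real.log (1/2) + Real.log α - 2 * Real.log a + 25/16)
          ≤ (1/2) * (Real.log (1/2) + Real.log α - 2 * Real.log a + 25/16) :=
        mul_le_mul_of_nonneg_right h1N hW
      have h3 : 2 * (1 + a ^ 2) / N ≤ 1 + a ^ 2 := by
        rw [div_le_iff₀ hN0]
        nlinarith only [mul_le_mul_of_nonneg_left hN2 (by positivity : (0:ℝ) ≤ 1 + a ^ 2)]
      linarith only [hlog_s, hlog_α, hlog_CM, h2, h3, hhalf.le, hhalf.ge, ha2]
    have hc₀X := mul_le_mul_of_nonneg_left hXge hc₀pos.le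
    have heq3 : c₀ * (2 * (1 + a ^ 2) / N) = 2 * N * a ^ 2 / (1 + a ^ 2) := by
      rw [hc₀]; field_simp
    have hp2' : c₀ * Real.log m - c₀ * Real.log s + S2 (1/2)
        ≤ ∫ r in s..m, En N f f' r := by linarith only [hp2]
    have hp3' : -(c₀ * Real.log m) + S2 α ≤ ∫ r in m..1, En N f f' r := by
      linarith only [hp3]
    have hItot : (∫ r in ε..s, En N f f' r) + (∫ r in s..m, En N f f' r)
        + (∫ r in m..1, En N f f' r) ≤ ∫ r in (0:ℝ)..1, En N f f' r := by
      linarith only [e1, e2, e3, h0ε]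
    have hnum : N / (1 + (1/2:ℝ) ^ 2) = (4/5) * N := by
      rw [show ((1:ℝ) + (1/2) ^ 2) = 5/4 by norm_num]; ring
    have hBh : N / (1 + a ^ 2) - (4/5) * N
        - (c₀/N) * (Real.log (1/2) - Real.log a) - (25/32) * (c₀/N) ≤ S2 (1/2) := by
      linarith only [hS2h, hnum.le, hnum.ge]
    have hBα : N / (1 + a ^ 2) - N / (1 + α ^ 2)
        - (c₀/N) * (Real.log α - Real.log a) - (25/32) * (c₀/N) ≤ S2 α := hS2α
    have hKey : c₀/2 + 2 * N * a ^ 2 / (1 + a ^ 2)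
        ≤ -(c₀ * Real.log s)
          - (c₀/N) * (Real.log (1/2) + Real.log α - 2 * Real.log a + 25/16) := by
      have hexp : c₀ * (-Real.log s
            - (1/N) * (Real.log (1/2) + Real.log α - 2 * Real.log a + 25/16)
            - 2 * (1 + a ^ 2) / N)
          = -(c₀ * Real.log s)
            - (c₀/N) * (Real.log (1/2) + Real.log α - 2 * Real.log a + 25/16)
            - c₀ * (2 * (1 + a ^ 2) / N) := by ring
      linarith only [hc₀X, hexp.le, hexp.ge, heq3]
    have hsum : (4/5) * N - N / (1 + K ^ 2)
        + (c₀ * Real.log m - c₀ * Real.log s + S2 (1/2))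
        + (-(c₀ * Real.log m) + S2 α)
        ≤ ∫ r in (0:ℝ)..1, En N f f' r := by
      linarith only [hp1, hp2', hp3', hItot, hδ1]
    have heq4' : 2 * N / (1 + a ^ 2) = 2 * N - 2 * N * a ^ 2 / (1 + a ^ 2) := by
      field_simp; ring
    have hIlb : 2 * N - N / (1 + α ^ 2) + c₀/2 - N / (1 + K ^ 2)
        ≤ ∫ r in (0:ℝ)..1, En N f f' r := by
      ring_nf at hsum hBh hBα hKey heq4' ⊢
      linarith only [hsum, hBh, hBα, hKey, heq4']
    have hIfin : N + N * α ^ 2 / (1 + α ^ 2) < ∫ r in (0:ℝ)..1, En N f f' r := by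
      rw [htgt]
      linarith only [hδ3, hIlb]
    calc 4 * π * N + 4 * π * N * α ^ 2 / (1 + α ^ 2)
        = 4 * π * (N + N * α ^ 2 / (1 + α ^ 2)) := by ring
      _ < 4 * π * (∫ r in (0:ℝ)..1, En N f f' r) := by
          exact mul_lt_mul_of_pos_left hIfin (by positivity)

end
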